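/- Let $M\in\mathbb{R}^{n\times n}$ satisfy $\|(M|_{j\times j})^{-1}\|_2 \le 1/\gamma$ for all $1\le j\le n$ (in particular all principal submatrices are invertible), and let $M = LU$ be its normalized $LU$-factorization. Then every column of $U^{-1}$ has $\ell_2$-norm at most $1/\gamma$: $\|(U^{-1})_{1:n,j}\|_{\ell_2} \le 1/\gamma$ for all $1\le j\le n$. -/

import Mathlib

open Matrix

/-- The spectral (ℓ²-operator) norm of a real matrix. -/
noncomputable def specNorm {m n : ℕ} (M : Matrix (Fin m) (Fin n) ℝ) : ℝ :=
  ‖LinearMap.toContinuousLinearMap (Matrix.toEuclideanLin M)‖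

/-- The upper-left `j × j` principal submatrix of `M`. -/
def psub {n : ℕ} (M : Matrix (Fin n) (Fin n) ℝ) (j : ℕ) (h : j ≤ n) :
    Matrix (Fin j) (Fin j) ℝ :=
  Matrix.of fun a b => M (Fin.castLE h a) (Fin.castLE h b)

/-- `L` is lower triangular. -/
def LowerTri {n : ℕ} (L : Matrix (Fin n) (Fin n) ℝ) : Prop :=
  ∀ i j : Fin n, i < j → L i j = 0

/-- `U` is upper triangular. -/
def UpperTri {n : ℕ} (U : Matrix (Fin n) (Fin n) ℝ) : Prop :=
  ∀ i j : Fin n, j < i → U i j = 0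

lemma sum_castLE {n k : ℕ} (h : k ≤ n) (f : Fin n → ℝ)
    (hf : ∀ l : Fin n, k ≤ l.val → f l = 0) :
    ∑ l : Fin k, f (Fin.castLE h l) = ∑ l : Fin n, f l := by
  calc ∑ l : Fin k, f (Fin.castLE h l)
      = ∑ l ∈ Finset.univ.map (Fin.castLEEmb h), f l := by
        rw [Finset.sum_map]; rfl
    _ = ∑ l : Fin n, f l := by
        apply Finset.sum_subset (Finset.subset_univ _)
        intro l _ hl
        apply hf
        by_contra hlt
        push_neg at hlt
        exact hl (Finset.mem_map.mpr ⟨⟨l.val, hlt⟩, Finset.mem_univ _, rfl⟩)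

lemma psub_mul_upper {n k : ℕ} (h : k ≤ n) (A B : Matrix (Fin n) (Fin n) ℝ)
    (hB : UpperTri B) : psub (A * B) k h = psub A k h * psub B k h := by
  ext a b
  simp only [psub, of_apply, Matrix.mul_apply]
  refine (sum_castLE h (fun l => A (Fin.castLE h a) l * B l (Fin.castLE h b)) ?_).symm
  intro l hl
  beta_reduce
  rw [hB l (Fin.castLE h b) (Fin.lt_def.mpr (lt_of_lt_of_le b.2 hl)), mul_zero]

lemma psub_one {n k : ℕ} (h : k ≤ n) : psub (1 : Matrix (Fin n) (Fin n) ℝ) k h = 1 := by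
  ext a b
  by_cases hab : a = b
  · subst hab; simp [psub, Matrix.one_apply]
  · have hne : Fin.castLE h a ≠ Fin.castLE h b := fun hc => hab (Fin.ext (show (Fin.castLE h a).val = (Fin.castLE h b).val from congrArg Fin.val hc))
    simp [psub, Matrix.one_apply, hab, hne]

/-- Lemma `lem:blockUstab`, scalar case: if all principal submatrices
satisfy `‖(M|_{j×j})⁻¹‖₂ ≤ 1/γ` then every column of `U⁻¹` has Euclidean norm `≤ 1/γ`. -/
theorem stmt_10 (n : ℕ) (γ : ℝ) (hγ : 0 < γ) (M L U : Matrix (Fin n) (Fin n) ℝ)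
    (hinv : ∀ (j : ℕ) (h : j ≤ n), 1 ≤ j →
      IsUnit (psub M j h) ∧ specNorm (psub M j h)⁻¹ ≤ 1 / γ)
    (hL : LowerTri L) (hLdiag : ∀ i, L i i = 1) (hU : UpperTri U) (hLU : M = L * U) :
    ∀ j : Fin n, Real.sqrt (∑ i : Fin n, (U⁻¹ i j) ^ 2) ≤ 1 / γ := by
  intro j
  have hn : 1 ≤ n := Fin.pos j
  set k := j.val + 1 with hk_def
  have hk : k ≤ n := j.2
  obtain ⟨hMk, hnorm⟩ := hinv k hk (Nat.le_add_left 1 _)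
  have hMkdet : IsUnit (psub M k hk).det := (Matrix.isUnit_iff_isUnit_det _).mp hMk
  -- full matrix is invertible
  have hMfull : IsUnit M := by
    have := (hinv n le_rfl hn).1
    have hps : psub M n le_rfl = M := rfl
    rwa [hps] at this
  have hMdet : IsUnit M.det := (Matrix.isUnit_iff_isUnit_det _).mp hMfull
  -- det L = 1
  have hLtri : L.BlockTriangular OrderDual.toDual := fun i j hij => hL i j hij
  have hLdet : L.det = 1 := by
    rw [Matrix.det_of_lowerTriangular L hLtri]
    simp [hLdiag]
  have hUdet : IsUnit U.det := by
    rw [hLU, Matrix.det_mul, hLdet, one_mul] at hMdet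
    exact hMdet
  -- U⁻¹ is upper triangular
  letI : Invertible U := U.invertibleOfIsUnitDet hUdet
  have hUitri : UpperTri U⁻¹ := fun i j hij =>
    Matrix.blockTriangular_inv_of_blockTriangular
      (fun i j hij => hU i j hij : U.BlockTriangular id) hij
  -- principal submatrix factorization
  have hfac : psub M k hk = psub L k hk * psub U k hk := by
    rw [hLU]; exact psub_mul_upper hk L U hU
  -- psub of the inverse is the inverse of psub
  have hsub_inv : psub U⁻¹ k hk = (psub U k hk)⁻¹ := by
    refine (Matrix.inv_eq_right_inv ?_).symm
    rw [← psub_mul_upper hk U U⁻¹ hUitri, Matrix.mul_nonsing_inv U hUdet, psub_one]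
  -- (psub U)⁻¹ = (psub M)⁻¹ * psub L
  have hUk_inv : (psub U k hk)⁻¹ = (psub M k hk)⁻¹ * psub L k hk := by
    refine Matrix.inv_eq_left_inv ?_
    rw [Matrix.mul_assoc, ← hfac, Matrix.nonsing_inv_mul _ hMkdet]
  set A := (psub M k hk)⁻¹ with hA
  set jk : Fin k := ⟨j.val, Nat.lt_succ_self _⟩ with hjk
  -- the jk-column of psub L is the standard basis vector
  have hcolL : ∀ l : Fin k, psub L k hk l jk = (Pi.single jk 1 : Fin k → ℝ) l := by
    intro l
    rcases eq_or_ne l jk with rfl | hne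
    · have : (Fin.castLE hk jk : Fin n) = j := Fin.ext rfl
      simp only [psub, of_apply, this, hLdiag, Pi.single_eq_same]
    · have hlj : l < jk := by
        have : l.val ≤ j.val := Nat.lt_succ_iff.mp l.2
        exact Fin.lt_def.mpr (lt_of_le_of_ne this (fun hc => hne (Fin.ext hc)))
      rw [psub, of_apply, hL _ _ (Fin.lt_def.mpr hlj), Pi.single_eq_of_ne hne]
  -- the jk-column of (psub U)⁻¹ equals that of A
  have hcol : ∀ l : Fin k, (psub U k hk)⁻¹ l jk = A l jk := by
    intro l
    rw [hUk_inv, Matrix.mul_apply]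
    rw [Finset.sum_eq_single jk]
    · rw [hcolL jk, Pi.single_eq_same, mul_one]
    · intro b _ hb
      rw [hcolL b, Pi.single_eq_of_ne hb, mul_zero]
    · intro hc; exact absurd (Finset.mem_univ jk) hc
  -- reduce the sum over Fin n to a sum over Fin k
  have hsum : ∑ i : Fin n, (U⁻¹ i j) ^ 2 = ∑ i : Fin k, (A i jk) ^ 2 := by
    rw [← sum_castLE hk (fun i => (U⁻¹ i j) ^ 2) (fun l hl => by
      beta_reduce
      rw [hUitri l j (Fin.lt_def.mpr (Nat.lt_of_succ_le hl))]; ring)]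
    apply Finset.sum_congr rfl
    intro i _
    have h1 : U⁻¹ (Fin.castLE hk i) j = psub U⁻¹ k hk i jk := by
      have : (Fin.castLE hk jk : Fin n) = j := Fin.ext rfl
      rw [psub, of_apply, this]
    rw [h1, hsub_inv, hcol]
  rw [hsum]
  -- now express via the spectral norm
  set x : EuclideanSpace ℝ (Fin k) := EuclideanSpace.single jk (1 : ℝ) with hx
  have hAx : (Matrix.toEuclideanLin A) x =
      (WithLp.equiv 2 (Fin k → ℝ)).symm (fun i => A i jk) := by
    rw [Matrix.toEuclideanLin_apply]
    congr 1
    have : x.ofLp = Pi.single jk (1 : ℝ) := rfl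
    rw [this, Matrix.mulVec_single_one]
    rfl
  have hnorm_eq : Real.sqrt (∑ i : Fin k, (A i jk) ^ 2) = ‖(Matrix.toEuclideanLin A) x‖ := by
    rw [hAx, EuclideanSpace.norm_eq]
    congr 1
    apply Finset.sum_congr rfl
    intro i _
    rw [Real.norm_eq_abs, sq_abs]
    rfl
  rw [hnorm_eq]
  have hxnorm : ‖x‖ = 1 := by rw [hx, EuclideanSpace.norm_single, norm_one]
  calc ‖(Matrix.toEuclideanLin A) x‖
      = ‖(LinearMap.toContinuousLinearMap (Matrix.toEuclideanLin A)) x‖ := rfl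
    _ ≤ specNorm A * ‖x‖ := ContinuousLinearMap.le_opNorm _ _
    _ = specNorm A := by rw [hxnorm, mul_one]
    _ ≤ 1 / γ := hnorm
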